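/- If KS_A is the most permissive controller of a contract automaton A, then L(KS_A) = 𝔷 ∩ L(A), where 𝔷 is the set of strong agreements. -/

import Mathlib

namespace CAut

/-- A context of labels: requests, offers, a distinguished idle label, and an
involution swapping requests and offers and fixing the idle label. -/
structure LabelCtx (L : Type) where
  req : Set L
  off : Set L
  idle : L
  req_off_disj : ∀ a : L, ¬ (a ∈ req ∧ a ∈ off)
  idle_not_req : idle ∉ req
  idle_not_off : idle ∉ off
  bar : L → L
  bar_req : ∀ a ∈ req, bar a ∈ off
  bar_off : ∀ a ∈ off, bar a ∈ req
  bar_bar : ∀ a ∈ req ∪ off, bar (bar a) = a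
  bar_idle : bar idle = idle

variable {L Q : Type} {n : ℕ}

/-- A word consisting only of idle labels (□*). -/
def IdleWord (C : LabelCtx L) (w : List L) : Prop := ∀ x ∈ w, x = C.idle

/-- `w` is a request action on `b`: it has the form □* b □* with b ∈ 𝕣. -/
def IsRequestOn (C : LabelCtx L) (w : List L) (b : L) : Prop :=
  b ∈ C.req ∧ ∃ u v : List L, IdleWord C u ∧ IdleWord C v ∧ w = u ++ b :: v

/-- `w` is an offer action on `b`: it has the form □* b □* with b ∈ 𝕠. -/
def IsOfferOn (C : LabelCtx L) (w : List L) (b : L) : Prop :=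
  b ∈ C.off ∧ ∃ u v : List L, IdleWord C u ∧ IdleWord C v ∧ w = u ++ b :: v

/-- `w` is a match action on `b`: it has the form □* b □* b̄ □* with b ∈ 𝕣 ∪ 𝕠. -/
def IsMatchOn (C : LabelCtx L) (w : List L) (b : L) : Prop :=
  b ∈ C.req ∪ C.off ∧
    ∃ u v z : List L, IdleWord C u ∧ IdleWord C v ∧ IdleWord C z ∧
      w = u ++ b :: (v ++ C.bar b :: z)

/-- An action is a request, offer, or match action (on some `b`). -/
def IsAction (C : LabelCtx L) (w : List L) : Prop :=
  ∃ b : L, IsRequestOn C w b ∨ IsOfferOn C w b ∨ IsMatchOn C w b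

def IsMatch (C : LabelCtx L) (w : List L) : Prop := ∃ b : L, IsMatchOn C w b

/-- The relation ⋈̇ : both are actions of the same length, offers on `b` must face
requests on `b` and vice versa. -/
def BowtieDot (C : LabelCtx L) (u v : List L) : Prop :=
  IsAction C u ∧ IsAction C v ∧ u.length = v.length ∧
    (∀ b : L, IsOfferOn C u b → IsRequestOn C v b) ∧
    (∀ b : L, IsRequestOn C u b → IsOfferOn C v b)

/-- ⋈ is the symmetric closure of ⋈̇. -/
def Bowtie (C : LabelCtx L) (u v : List L) : Prop :=
  BowtieDot C u v ∨ BowtieDot C v u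

/-- A contract automaton of rank `n` (transition structure; the well-formedness
conditions are in `CAWF`). -/
structure CA (L Q : Type) (n : ℕ) where
  init : Fin n → Q
  trans : Set ((Fin n → Q) × (Fin n → L) × (Fin n → Q))
  acc : Set (Fin n → Q)

/-- Well-formedness of a contract automaton: every transition label is an action
(request, offer, or match), and components labelled □ stay idle. -/
def CAWF (C : LabelCtx L) (A : CA L Q n) : Prop :=
  ∀ t ∈ A.trans,
    IsAction C (List.ofFn t.2.1) ∧
      ∀ i : Fin n, t.2.1 i = C.idle → t.1 i = t.2.2 i

/-- A run of a contract automaton from a state along a word ending in a state. -/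
inductive CARun {L Q : Type} {n : ℕ} (A : CA L Q n) :
    (Fin n → Q) → List (Fin n → L) → (Fin n → Q) → Prop
  | nil (q : Fin n → Q) : CARun A q [] q
  | cons {q : Fin n → Q} {a : Fin n → L} {q' : Fin n → Q}
      {w : List (Fin n → L)} {q'' : Fin n → Q} :
      (q, a, q') ∈ A.trans → CARun A q' w q'' → CARun A q (a :: w) q''

/-- The language accepted by a contract automaton. -/
def CALang (A : CA L Q n) : Set (List (Fin n → L)) :=
  { w | ∃ q, q ∈ A.acc ∧ CARun A A.init w q }

/-- A state is reachable from the initial state. -/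
def CAReach (A : CA L Q n) (q : Fin n → Q) : Prop := ∃ w, CARun A A.init w q

def Deterministic (A : CA L Q n) : Prop :=
  ∀ q a q₁ q₂, (q, a, q₁) ∈ A.trans → (q, a, q₂) ∈ A.trans → q₁ = q₂

/-- A strong agreement: a finite non-empty word of match actions. -/
def StrongAgreement (C : LabelCtx L) (φ : List (Fin n → L)) : Prop :=
  φ ≠ [] ∧ ∀ a ∈ φ, IsMatch C (List.ofFn a)

/-- A is strongly safe when its language consists of strong agreements only. -/
def StronglySafe (C : LabelCtx L) (A : CA L Q n) : Prop :=
  ∀ w ∈ CALang A, StrongAgreement C w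

/-- K is a (strong) controller of A: a contract automaton with
L(K) ⊆ 𝔷 ∩ L(A). -/
def IsController (C : LabelCtx L) (A : CA L Q n) {Q' : Type} (K : CA L Q' n) : Prop :=
  CAWF C K ∧ ∀ w ∈ CALang K, StrongAgreement C w ∧ w ∈ CALang A

/-- K is a most permissive controller of A: a controller whose language contains
the language of every controller of A. -/
def IsMPC (C : LabelCtx L) (A : CA L Q n) {Q' : Type} (K : CA L Q' n) : Prop :=
  IsController C A K ∧
    ∀ (Q'' : Type) (K' : CA L Q'' n), IsController C A K' → CALang K' ⊆ CALang K

/-- The sub-automaton 𝒦 of A consisting of the match transitions of A only. -/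
def matchSub (C : LabelCtx L) (A : CA L Q n) : CA L Q n where
  init := A.init
  trans := { t | t ∈ A.trans ∧ IsMatch C (List.ofFn t.2.1) }
  acc := A.acc

/-- A state is redundant when no accepting state can be reached from it. -/
def Redundant (K : CA L Q n) (q : Fin n → Q) : Prop :=
  ¬ ∃ w qf, qf ∈ K.acc ∧ CARun K q w qf

/-- The concrete most permissive controller KS_A: the match transitions of A
whose source and target are not redundant in 𝒦. -/
def mpc (C : LabelCtx L) (A : CA L Q n) : CA L Q n where
  init := A.init
  trans := { t | t ∈ (matchSub C A).trans ∧
      ¬ Redundant (matchSub C A) t.1 ∧ ¬ Redundant (matchSub C A) t.2.2 }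
  acc := A.acc

/-! ### Communicating machines -/

/-- Actions of communicating machines: sends `(sr)!a` and receives `(sr)?a`;
`none` stands for the anonymous environment participant `−`. -/
inductive CAct (n : ℕ) (L : Type) : Type
  | send (s r : Option (Fin n)) (a : L) : CAct n L
  | recv (s r : Option (Fin n)) (a : L) : CAct n L

/-- `v` is a match action (as a rank-`n` tuple) on the request name `a`, with
offer component `i` and request component `j`. -/
def MatchAt (C : LabelCtx L) (v : Fin n → L) (i j : Fin n) (a : L) : Prop :=
  i ≠ j ∧ a ∈ C.req ∧ v i = C.bar a ∧ v j = a ∧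
    ∀ k : Fin n, k ≠ i → k ≠ j → v k = C.idle

/-- `v` is an offer action with offer component `i`, on the request name `a`. -/
def OfferAt (C : LabelCtx L) (v : Fin n → L) (i : Fin n) (a : L) : Prop :=
  a ∈ C.req ∧ v i = C.bar a ∧ ∀ k : Fin n, k ≠ i → v k = C.idle

/-- `v` is a request action with request component `j`, on the name `a`. -/
def RequestAt (C : LabelCtx L) (v : Fin n → L) (j : Fin n) (a : L) : Prop :=
  a ∈ C.req ∧ v j = a ∧ ∀ k : Fin n, k ≠ j → v k = C.idle

/-- The CFSM transitions of participant `p` obtained by translating the contract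
automaton `A` (Definition of the translation ⟦A⟧_p). -/
def cfsmTrans (C : LabelCtx L) (A : CA L Q n) (p : Fin n) :
    Set (Q × CAct n L × Q) :=
  { t | ∃ q v q', (q, v, q') ∈ A.trans ∧
      ((∃ i j a, MatchAt C v i j a ∧ p = i ∧
          t = (q i, CAct.send (some i) (some j) a, q' i)) ∨
       (∃ i j a, MatchAt C v i j a ∧ p = j ∧
          t = (q j, CAct.recv (some i) (some j) a, q' j)) ∨
       (∃ i a, OfferAt C v i a ∧ p = i ∧
          t = (q i, CAct.send (some i) none a, q' i)) ∨
       (∃ j a, RequestAt C v j a ∧ p = j ∧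
          t = (q j, CAct.recv none (some j) a, q' j))) }

/-- A configuration of a communicating system: local states and FIFO buffers. -/
structure Conf (n : ℕ) (Q L : Type) where
  st : Fin n → Q
  buf : Option (Fin n) × Option (Fin n) → List L

/-- The (unrestricted, unbounded-buffer) step relation of a communicating system
with transition relations `δ p` for each participant `p`. -/
inductive Step {L Q : Type} {n : ℕ} (δ : Fin n → Set (Q × CAct n L × Q)) :
    Conf n Q L → CAct n L → Conf n Q L → Prop
  | send {c : Conf n Q L} {i : Fin n} {r : Option (Fin n)} {a : L} {q' : Q} :
      (c.st i, CAct.send (some i) r a, q') ∈ δ i →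
      Step δ c (CAct.send (some i) r a)
        ⟨Function.update c.st i q',
          Function.update c.buf (some i, r) (c.buf (some i, r) ++ [a])⟩
  | recv {c : Conf n Q L} {s : Option (Fin n)} {j : Fin n} {a : L} {q' : Q}
      {rest : List L} :
      (c.st j, CAct.recv s (some j) a, q') ∈ δ j →
      c.buf (s, some j) = a :: rest →
      Step δ c (CAct.recv s (some j) a)
        ⟨Function.update c.st j q', Function.update c.buf (s, some j) rest⟩

/-- Reachability in the unrestricted semantics. -/
def ReachU (δ : Fin n → Set (Q × CAct n L × Q)) : Conf n Q L → Conf n Q L → Prop :=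
  Relation.ReflTransGen (fun c c' => ∃ ℓ, Step δ c ℓ c')

/-- All buffers are empty. -/
def Stable (c : Conf n Q L) : Prop := ∀ ch, c.buf ch = []

/-- The configuration is stable, or exactly one channel contains exactly one message. -/
def AtMostOne (c : Conf n Q L) : Prop :=
  Stable c ∨ ∃ ch a, c.buf ch = [a] ∧ ∀ ch', ch' ≠ ch → c.buf ch' = []

/-- Membership in RS≤1: reachable (from `c0`) and stable or with a single message. -/
def RS1 (δ : Fin n → Set (Q × CAct n L × Q)) (c0 c : Conf n Q L) : Prop :=
  ReachU δ c0 c ∧ AtMostOne c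

/-- The 1-buffer step relation ↠, relative to the initial configuration `c0`. -/
def Step1 (δ : Fin n → Set (Q × CAct n L × Q)) (c0 c : Conf n Q L)
    (ℓ : CAct n L) (c' : Conf n Q L) : Prop :=
  Step δ c ℓ c' ∧ RS1 δ c0 c ∧ RS1 δ c0 c'

/-- Firing a sequence of actions under the 1-buffer semantics. -/
inductive Steps1 {L Q : Type} {n : ℕ} (δ : Fin n → Set (Q × CAct n L × Q))
    (c0 : Conf n Q L) : Conf n Q L → List (CAct n L) → Conf n Q L → Prop
  | nil (c : Conf n Q L) : Steps1 δ c0 c [] c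
  | cons {c : Conf n Q L} {ℓ : CAct n L} {c' : Conf n Q L}
      {f : List (CAct n L)} {c'' : Conf n Q L} :
      Step1 δ c0 c ℓ c' → Steps1 δ c0 c' f c'' → Steps1 δ c0 c (ℓ :: f) c''

/-- Reachability under the 1-buffer semantics. -/
def Reach1 (δ : Fin n → Set (Q × CAct n L × Q)) (c0 c c' : Conf n Q L) : Prop :=
  ∃ f, Steps1 δ c0 c f c'

/-- The initial configuration of the communicating system obtained from `A`. -/
def initConf (A : CA L Q n) : Conf n Q L := ⟨A.init, fun _ => []⟩

/-- Final configuration: stable with accepting (vector of) local states. -/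
def FinalConf (Facc : Set (Fin n → Q)) (c : Conf n Q L) : Prop :=
  Stable c ∧ c.st ∈ Facc

/-- Deadlock under the 1-buffer semantics: not final and no outgoing ↠ step. -/
def Deadlock1 (δ : Fin n → Set (Q × CAct n L × Q)) (c0 : Conf n Q L)
    (Facc : Set (Fin n → Q)) (c : Conf n Q L) : Prop :=
  ¬ FinalConf Facc c ∧ ¬ ∃ ℓ c', Step1 δ c0 c ℓ c'

/-- Convergence under the 1-buffer semantics: from every reachable configuration
a final configuration is reachable. -/
def Convergent1 (δ : Fin n → Set (Q × CAct n L × Q)) (c0 : Conf n Q L)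
    (Facc : Set (Fin n → Q)) : Prop :=
  ∀ c, Reach1 δ c0 c0 c → ∃ c', Reach1 δ c0 c c' ∧ FinalConf Facc c'

/-- Convergence under the unrestricted (unbounded-buffer) semantics. -/
def ConvergentU (δ : Fin n → Set (Q × CAct n L × Q)) (c0 : Conf n Q L)
    (Facc : Set (Fin n → Q)) : Prop :=
  ∀ c, ReachU δ c0 c → ∃ c', ReachU δ c c' ∧ FinalConf Facc c'

/-- The translation ⟦φ⟧ of a word of contract-automaton actions into a trace of
communicating-machine actions (a relation, since ⟦·⟧ is partial). -/
inductive SemWord {L : Type} {n : ℕ} (C : LabelCtx L) :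
    List (Fin n → L) → List (CAct n L) → Prop
  | nil : SemWord C [] []
  | matchw {v : Fin n → L} {i j : Fin n} {a : L} {φ : List (Fin n → L)}
      {f : List (CAct n L)} :
      MatchAt C v i j a → SemWord C φ f →
      SemWord C (v :: φ)
        (CAct.send (some i) (some j) a :: CAct.recv (some i) (some j) a :: f)
  | offerw {v : Fin n → L} {i : Fin n} {a : L} {φ : List (Fin n → L)}
      {f : List (CAct n L)} :
      OfferAt C v i a → SemWord C φ f →
      SemWord C (v :: φ) (CAct.send (some i) none a :: f)
  | requestw {v : Fin n → L} {j : Fin n} {a : L} {φ : List (Fin n → L)}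
      {f : List (CAct n L)} :
      RequestAt C v j a → SemWord C φ f →
      SemWord C (v :: φ) (CAct.recv none (some j) a :: f)

/-- A liable transition of the controlled system KS_A/A: a transition of A, not
in the controller, whose source is reachable in the controller. -/
def Liable (C : LabelCtx L) (A : CA L Q n)
    (t : (Fin n → Q) × (Fin n → L) × (Fin n → Q)) : Prop :=
  t ∈ A.trans ∧ t ∉ (mpc C A).trans ∧ CAReach (mpc C A) t.1

/-- The run of A from its initial state labelled φ traverses a liable transition. -/
def TraversesLiable (C : LabelCtx L) (A : CA L Q n) (φ : List (Fin n → L)) : Prop :=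
  ∃ φ₁ v φ₂ q q', φ = φ₁ ++ v :: φ₂ ∧ CARun A A.init φ₁ q ∧
    Liable C A (q, v, q')

/-- The branching condition. -/
def Branching (C : LabelCtx L) (B : CA L Q n) : Prop :=
  ∀ q₁ q₂, CAReach B q₁ → CAReach B q₂ →
    ∀ (v : Fin n → L) (i j : Fin n) (a : L), MatchAt C v i j a →
      (∃ q', (q₁, v, q') ∈ B.trans) → q₁ i = q₂ i →
      ∃ q'', (q₂, v, q'') ∈ B.trans

/-- A mixed-choice state: some participant has both an outgoing offer (p-th label
component in 𝕠) and an outgoing request (p-th label component in 𝕣). -/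
def MixedChoiceState (C : LabelCtx L) (A : CA L Q n) (q : Fin n → Q) : Prop :=
  ∃ (p : Fin n) (v₁ : Fin n → L) (q₁ : Fin n → Q) (v₂ : Fin n → L) (q₂ : Fin n → Q),
    (q, v₁, q₁) ∈ A.trans ∧ (q, v₂, q₂) ∈ A.trans ∧ v₁ p ∈ C.off ∧ v₂ p ∈ C.req

/-- A principal: a rank-1 contract automaton no two of whose transitions have
complementary (⋈) labels. -/
def IsPrincipal (C : LabelCtx L) (P : CA L Q 1) : Prop :=
  CAWF C P ∧ ∀ t₁ ∈ P.trans, ∀ t₂ ∈ P.trans,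
    ¬ Bowtie C (List.ofFn t₁.2.1) (List.ofFn t₂.2.1)

/-- The idle tuple □ⁿ. -/
def idleVec (C : LabelCtx L) (m : ℕ) : Fin m → L := fun _ => C.idle

/-- The (binary) product of contract automata: synchronisation of ⋈-related
transitions; single components may move alone only when no synchronisation with
the other component is possible from the current state. -/
def prodCA (C : LabelCtx L) {m k : ℕ} (A : CA L Q m) (B : CA L Q k) :
    CA L Q (m + k) where
  init := Fin.append A.init B.init
  acc := { q | ∃ qa qb, qa ∈ A.acc ∧ qb ∈ B.acc ∧ q = Fin.append qa qb }
  trans := { t |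
    (∃ qa a qa' qb b qb', (qa, a, qa') ∈ A.trans ∧ (qb, b, qb') ∈ B.trans ∧
        Bowtie C (List.ofFn a) (List.ofFn b) ∧
        t = (Fin.append qa qb, Fin.append a b, Fin.append qa' qb')) ∨
    (∃ qa a qa' qb, (qa, a, qa') ∈ A.trans ∧
        (∀ b qb', (qb, b, qb') ∈ B.trans → ¬ Bowtie C (List.ofFn a) (List.ofFn b)) ∧
        t = (Fin.append qa qb, Fin.append a (idleVec C k), Fin.append qa' qb)) ∨
    (∃ qb b qb' qa, (qb, b, qb') ∈ B.trans ∧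
        (∀ a qa', (qa, a, qa') ∈ A.trans → ¬ Bowtie C (List.ofFn b) (List.ofFn a)) ∧
        t = (Fin.append qa qb, Fin.append (idleVec C m) b, Fin.append qa qb')) }

/-- Final configuration with per-participant accepting sets. -/
def FinalP {L Q : Type} {n : ℕ} (Facc : Fin n → Set Q) (c : Conf n Q L) : Prop :=
  Stable c ∧ ∀ p : Fin n, c.st p ∈ Facc p

/-! ### Auxiliary material for the proof of `mpc_lang_eq` -/

open Classical in
/-- Count of non-idle labels at component `i` in a word. -/
noncomputable def cnt (C : LabelCtx L) : List (Fin n → L) → Fin n → ℕ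
  | [] => fun _ => 0
  | a :: u => fun i => (if a i = C.idle then cnt C u i else cnt C u i + 1)

open Classical in
lemma cnt_cons_idle (C : LabelCtx L) {a : Fin n → L} {i : Fin n}
    (h : a i = C.idle) (u : List (Fin n → L)) :
    cnt C (a :: u) i = cnt C u i := by
  show (if a i = C.idle then cnt C u i else cnt C u i + 1) = cnt C u i
  rw [if_pos h]

open Classical in
lemma cnt_cons_ne (C : LabelCtx L) {a : Fin n → L} {i : Fin n}
    (h : a i ≠ C.idle) (u : List (Fin n → L)) :
    cnt C (a :: u) i = cnt C u i + 1 := by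
  show (if a i = C.idle then cnt C u i else cnt C u i + 1) = cnt C u i + 1
  rw [if_neg h]

lemma cnt_append (C : LabelCtx L) (u v : List (Fin n → L)) (i : Fin n) :
    cnt C (u ++ v) i = cnt C u i + cnt C v i := by
  induction u with
  | nil => simp [cnt]
  | cons a u ih =>
    rw [List.cons_append]
    by_cases hai : a i = C.idle
    · rw [cnt_cons_idle C hai, cnt_cons_idle C hai, ih]
    · rw [cnt_cons_ne C hai, cnt_cons_ne C hai, ih]
      omega

/-- Every match-action letter has a non-idle component. -/
lemma match_nonidle (C : LabelCtx L) {a : Fin n → L}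
    (h : IsMatch C (List.ofFn a)) : ∃ i, a i ≠ C.idle := by
  obtain ⟨b, hb, u, v, z, _, _, _, heq⟩ := h
  have hmem : b ∈ List.ofFn a := by rw [heq]; simp
  obtain ⟨i, hi⟩ := List.mem_ofFn.mp hmem
  refine ⟨i, ?_⟩
  rw [hi]
  rcases hb with hb | hb
  · intro hc; exact C.idle_not_req (hc ▸ hb)
  · intro hc; exact C.idle_not_off (hc ▸ hb)

/-- Injectivity of `cnt` on prefixes of a word all of whose letters have a
non-idle component. -/
lemma cnt_inj (C : LabelCtx L) {w u u' : List (Fin n → L)}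
    (hm : ∀ a ∈ w, ∃ i, a i ≠ C.idle)
    (hu : u <+: w) (hu' : u' <+: w) (hc : cnt C u = cnt C u') : u = u' := by
  have key : ∀ x y : List (Fin n → L), x <+: y → y <+: w →
      cnt C x = cnt C y → x = y := by
    intro x y hxy hyw hcxy
    obtain ⟨d, hd⟩ := hxy
    cases d with
    | nil => simpa using hd
    | cons a d' =>
      exfalso
      have ha : a ∈ w := hyw.subset (by rw [← hd]; simp)
      obtain ⟨i, hi⟩ := hm a ha
      have hthis := congrFun hcxy i
      rw [← hd, cnt_append] at hthis
      rw [cnt_cons_ne C hi] at hthis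
      omega
  rcases List.prefix_or_prefix_of_prefix hu hu' with h1 | h1
  · exact key u u' h1 hu' hc
  · exact (key u' u h1 hu hc.symm).symm

/-- The linear (one-word) contract automaton accepting exactly `w`. -/
noncomputable def lin (C : LabelCtx L) (w : List (Fin n → L)) : CA L ℕ n where
  init := cnt C ([] : List (Fin n → L))
  trans := { t | ∃ u a v, w = u ++ a :: v ∧
      t = (cnt C u, a, cnt C (u ++ [a])) }
  acc := { cnt C w }

lemma lin_run_char (C : LabelCtx L) (w : List (Fin n → L))
    (hm : ∀ a ∈ w, ∃ i, a i ≠ C.idle) :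
    ∀ {q₀ : Fin n → ℕ} {f : List (Fin n → L)} {q : Fin n → ℕ},
      CARun (lin C w) q₀ f q → ∀ u, u <+: w → q₀ = cnt C u →
      (u ++ f) <+: w ∧ q = cnt C (u ++ f) := by
  intro q₀ f q hr
  induction hr with
  | nil q' =>
    intro u hu hq
    simpa using ⟨hu, hq⟩
  | @cons q a q' f' q'' ht hrest ih =>
    intro u hu hq
    obtain ⟨u₁, a₁, v₁, hw, heq⟩ := ht
    have hval : (q, a, q') = (cnt C u₁, a₁, cnt C (u₁ ++ [a₁])) := heq
    have hq1 : q = cnt C u₁ := congrArg Prod.fst hval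
    have ha : a = a₁ := congrArg (fun p => p.2.1) hval
    have hq' : q' = cnt C (u₁ ++ [a₁]) := congrArg (fun p => p.2.2) hval
    have hu1w : u₁ <+: w := ⟨a₁ :: v₁, hw.symm⟩
    have huu1 : u = u₁ := cnt_inj C hm hu hu1w (hq ▸ hq1)
    subst huu1 ha
    have hua : (u ++ [a]) <+: w := ⟨v₁, by simpa using hw.symm⟩
    obtain ⟨h1, h2⟩ := ih (u ++ [a]) hua hq'
    constructor
    · simpa using h1
    · simpa using h2

/-- if KS_A is the most permissive controller of A then
L(KS_A) = 𝔷 ∩ L(A). -/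
theorem mpc_lang_eq {L Q Q' : Type} {n : ℕ}
    (C : LabelCtx L) (A : CA L Q n) (hA : CAWF C A)
    (K : CA L Q' n) (h : IsMPC C A K) :
    CALang K = { w | StrongAgreement C w ∧ w ∈ CALang A } := by
  ext w
  constructor
  · intro hw
    exact h.1.2 w hw
  · rintro ⟨hsa, hwa⟩
    -- every letter of w has a non-idle component
    have hm : ∀ a ∈ w, ∃ i, a i ≠ C.idle := fun a ha =>
      match_nonidle C (hsa.2 a ha)
    -- w is accepted by the linear automaton
    have hwlin : w ∈ CALang (lin C w) := by
      refine ⟨cnt C w, rfl, ?_⟩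
      have : ∀ (v u : List (Fin n → L)), w = u ++ v →
          CARun (lin C w) (cnt C u) v (cnt C w) := by
        intro v
        induction v with
        | nil => intro u hu; rw [hu]; simpa using CARun.nil (cnt C u)
        | cons a v ih =>
          intro u hu
          refine CARun.cons (⟨u, a, v, hu, rfl⟩ :
              (cnt C u, a, cnt C (u ++ [a])) ∈ (lin C w).trans) ?_
          exact ih (u ++ [a]) (by simpa using hu)
      exact this w [] rfl
    -- the linear automaton accepts only w
    have honly : ∀ f ∈ CALang (lin C w), f = w := by
      rintro f ⟨q, hqacc, hrun⟩
      obtain ⟨hpre, hq⟩ := lin_run_char C w hm hrun [] ⟨w, rfl⟩ rfl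
      simp only [List.nil_append] at hpre hq
      have hqw : q = cnt C w := hqacc
      exact cnt_inj C hm hpre ⟨[], by simp⟩ (by rw [← hq, hqw])
    -- the linear automaton is well-formed
    have hwf : CAWF C (lin C w) := by
      rintro ⟨q, a, q'⟩ ⟨u, a₁, v, hweq, heq⟩
      have hval : (q, a, q') = (cnt C u, a₁, cnt C (u ++ [a₁])) := heq
      have ha : a = a₁ := congrArg (fun p => p.2.1) hval
      have hq : q = cnt C u := congrArg Prod.fst hval
      have hq' : q' = cnt C (u ++ [a₁]) := congrArg (fun p => p.2.2) hval
      have hamem : a ∈ w := by rw [hweq, ha]; simp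
      constructor
      · obtain ⟨b, hb⟩ := hsa.2 a hamem
        exact ⟨b, Or.inr (Or.inr hb)⟩
      · intro i hidle
        show q i = q' i
        have hidle' : a i = C.idle := hidle
        have ha1 : a₁ i = C.idle := ha ▸ hidle'
        have h4 : cnt C [a₁] i = 0 := by
          rw [cnt_cons_idle C ha1]; rfl
        rw [hq, hq', cnt_append, h4]
        rfl
    -- the linear automaton is a controller of A
    have hctrl : IsController C A (lin C w) := by
      refine ⟨hwf, fun f hf => ?_⟩
      rw [honly f hf]
      exact ⟨hsa, hwa⟩
    exact h.2 ℕ (lin C w) hctrl hwlin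

end CAut
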